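/- Let f : [0,∞) → ℝ be differentiable with f(t) > 0 for all t ≥ 0, let n be a positive integer, let k ≥ 0 and α ∈ ℝ. Assume that f'(t) + (α − k·f(t)ⁿ)·f(t) ≤ 0 for all t ≥ 0, and that α − k·f(0)ⁿ > 0. Then f(t) < f(0) for all t > 0. -/
import Mathlib

open Filter Set Topology

/-- Lemma 2.3 of the paper: if `f > 0` is differentiable on `[0, ∞)`,
`f' + (α - k fⁿ) f ≤ 0` on `[0, ∞)` and `α - k f(0)ⁿ > 0`, then `f(t) < f(0)` for all `t > 0`. -/
theorem comparison_lemma (f f' : ℝ → ℝ) (n : ℕ) (hn : 0 < n) (k α : ℝ) (hk : 0 ≤ k)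
    (hderiv : ∀ t ≥ (0 : ℝ), HasDerivAt f (f' t) t)
    (hpos : ∀ t ≥ (0 : ℝ), 0 < f t)
    (hineq : ∀ t ≥ (0 : ℝ), f' t + (α - k * f t ^ n) * f t ≤ 0)
    (hinit : 0 < α - k * f 0 ^ n) :
    ∀ t > (0 : ℝ), f t < f 0 := by
  by_contra hcon
  push_neg at hcon
  obtain ⟨t₀, ht₀pos, ht₀⟩ := hcon
  have hf0 := hpos 0 le_rfl
  have hf'0 : f' 0 < 0 := by nlinarith [hineq 0 le_rfl]
  have hs0 : Tendsto (slope f 0) (𝓝[>] 0) (𝓝 (f' 0)) :=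
    (hasDerivAt_iff_tendsto_slope.1 (hderiv 0 le_rfl)).mono_left
      (nhdsWithin_mono 0 fun x hx => ne_of_gt hx)
  have hev : ∀ᶠ t in 𝓝[>] (0:ℝ), slope f 0 t < 0 := hs0.eventually_lt_const hf'0
  obtain ⟨ε, hε, hIoo⟩ := mem_nhdsGT_iff_exists_Ioo_subset.1 hev
  have small : ∀ t ∈ Ioo (0:ℝ) ε, f t < f 0 := by
    intro t ht
    have h1 : (f t - f 0) / (t - 0) < 0 := by
      have h := hIoo ht
      simp only [Set.mem_setOf_eq, slope_def_field] at h
      exact h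
    rw [sub_zero] at h1
    rcases div_neg_iff.1 h1 with ⟨_, h⟩ | ⟨h, _⟩
    · linarith [ht.1]
    · linarith
  set S : Set ℝ := {t | 0 < t ∧ f 0 ≤ f t} with hS
  have hne : S.Nonempty := ⟨t₀, ht₀pos, ht₀⟩
  have hbdd : BddBelow S := ⟨0, fun s hs => hs.1.le⟩
  set T := sInf S with hT
  have hlow : ∀ s ∈ S, ε ≤ s := by
    intro s hs
    by_contra hlt
    push_neg at hlt
    exact absurd hs.2 (not_le.2 (small s ⟨hs.1, hlt⟩))
  have hTε : ε ≤ T := le_csInf hne hlow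
  have hT0 : (0:ℝ) < T := lt_of_lt_of_le hε hTε
  have hcontT : ContinuousAt f T := (hderiv T hT0.le).continuousAt
  have hlt : ∀ t ∈ Ioo (0:ℝ) T, f t < f 0 := by
    intro t ht
    by_contra hge
    push_neg at hge
    exact absurd (csInf_le hbdd ⟨ht.1, hge⟩) (not_le.2 ht.2)
  have hge : f 0 ≤ f T := by
    by_contra hltT
    push_neg at hltT
    have hev2 : ∀ᶠ x in 𝓝 T, f x < f 0 := hcontT.eventually_lt_const hltT
    obtain ⟨δ, hδ, hball⟩ := Metric.eventually_nhds_iff.1 hev2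
    have hstep : T + δ/2 ≤ T := by
      refine le_csInf hne fun s hs => ?_
      by_contra hlt2
      push_neg at hlt2
      have hTs : T ≤ s := csInf_le hbdd hs
      have hd : dist s T < δ := by
        rw [Real.dist_eq, abs_lt]; constructor <;> linarith
      exact absurd hs.2 (not_le.2 (hball hd))
    linarith
  have hneT : (𝓝[Ioo (0:ℝ) T] T).NeBot := by
    apply mem_closure_iff_nhdsWithin_neBot.1
    rw [closure_Ioo (ne_of_lt hT0)]
    exact ⟨hT0.le, le_rfl⟩
  have hle : f T ≤ f 0 := by
    have htend : Tendsto f (𝓝[Ioo (0:ℝ) T] T) (𝓝 (f T)) :=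
      hcontT.tendsto.mono_left nhdsWithin_le_nhds
    exact le_of_tendsto htend
      (eventually_of_mem self_mem_nhdsWithin fun t ht => (hlt t ht).le)
  have hEq : f T = f 0 := le_antisymm hle hge
  have hsT : Tendsto (slope f T) (𝓝[Ioo (0:ℝ) T] T) (𝓝 (f' T)) :=
    (hasDerivAt_iff_tendsto_slope.1 (hderiv T hT0.le)).mono_left
      (nhdsWithin_mono T fun x hx => ne_of_lt hx.2)
  have hf'T : 0 ≤ f' T := by
    refine ge_of_tendsto hsT (eventually_of_mem self_mem_nhdsWithin fun t ht => ?_)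
    have h1 : f t < f T := by rw [hEq]; exact hlt t ht
    have h2 : t - T < 0 := sub_neg.2 ht.2
    rw [slope_def_field]
    exact (div_pos_of_neg_of_neg (by linarith) h2).le
  have hiT := hineq T hT0.le
  rw [hEq] at hiT
  nlinarith
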